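/- Let A be a unital C*-algebra and let a, b ∈ A satisfy σ(a·x) = σ(b·x) for all x ∈ A. If a is self-adjoint (a = a*), then b is self-adjoint (b = b*). -/

import Mathlib

/-- Theorem 2.6, Claim 1: In a unital C*-algebra, if `σ(a x) = σ(b x)` for all
`x` and `a` is self-adjoint, then `b` is self-adjoint. -/
theorem isSelfAdjoint_of_spectrum_mul_eq
    {A : Type*} [NormedRing A] [StarRing A] [CStarRing A] [CompleteSpace A]
    [NormedAlgebra ℂ A] [StarModule ℂ A]
    (a b : A)
    (h : ∀ x : A, spectrum ℂ (a * x) = spectrum ℂ (b * x))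
    (ha : a = star a) :
    b = star b := by
  letI : CStarAlgebra A :=
    { ‹NormedRing A›, ‹StarRing A›, ‹CompleteSpace A›, ‹CStarRing A›,
      ‹NormedAlgebra ℂ A›, ‹StarModule ℂ A› with }
  have ha' : IsSelfAdjoint a := ha.symm
  -- the spectrum of `b` is real
  have hσb : ∀ z ∈ spectrum ℂ b, z.im = 0 := by
    intro z hz
    have hz' : z ∈ spectrum ℂ a := by
      have h1 := h 1
      rw [mul_one, mul_one] at h1
      rw [h1]; exact hz
    have := ha'.mem_spectrum_eq_re hz'
    rw [this]; simp
  -- helper: membership of 1 commutes with swapping a product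
  have swap : ∀ u v : A, (1:ℂ) ∈ spectrum ℂ (u * v) ↔ (1:ℂ) ∈ spectrum ℂ (v * u) := by
    intro u v
    simpa using (spectrum.unit_mem_mul_comm (R := ℂ) (a := u) (b := v) (r := 1))
  have hstar : ∀ u : A, (1:ℂ) ∈ spectrum ℂ u ↔ (1:ℂ) ∈ spectrum ℂ (star u) := by
    intro u
    rw [spectrum.map_star]
    constructor
    · intro h1
      simpa using Set.star_mem_star.mpr h1
    · intro h1
      simpa using h1
  -- key equivalence
  have key : ∀ y : A, (1:ℂ) ∈ spectrum ℂ (b * y) ↔ (1:ℂ) ∈ spectrum ℂ (star b * y) := by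
    intro y
    calc (1:ℂ) ∈ spectrum ℂ (b * y)
        ↔ (1:ℂ) ∈ spectrum ℂ (a * y) := by rw [h y]
      _ ↔ (1:ℂ) ∈ spectrum ℂ (y * a) := swap _ _
      _ ↔ (1:ℂ) ∈ spectrum ℂ (a * star y) := by
            rw [hstar (y * a), star_mul, ← ha]
      _ ↔ (1:ℂ) ∈ spectrum ℂ (b * star y) := by rw [h (star y)]
      _ ↔ (1:ℂ) ∈ spectrum ℂ (y * star b) := by
            rw [hstar (b * star y), star_mul, star_star]
      _ ↔ (1:ℂ) ∈ spectrum ℂ (star b * y) := swap _ _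
  -- spectrum of `b - star b` is real
  have hσd : ∀ z ∈ spectrum ℂ (b - star b), z.im = 0 := by
    intro z hz
    by_cases hz0 : z = 0
    · simp [hz0]
    by_cases hzb : z ∈ spectrum ℂ b
    · exact hσb z hzb
    exfalso
    rw [spectrum.notMem_iff] at hzb
    obtain ⟨u, hu⟩ := hzb
    have hzu : IsUnit (algebraMap ℂ A z) := (IsUnit.mk0 z hz0).map (algebraMap ℂ A)
    have hcalc : ∀ c : A, algebraMap ℂ A 1 - c * -(↑u⁻¹ : A) =
        (algebraMap ℂ A z - b + c) * (↑u⁻¹ : A) := by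
      intro c
      rw [map_one, add_mul, mul_neg, sub_neg_eq_add, ← hu, u.mul_inv]
    have h1 : (1:ℂ) ∉ spectrum ℂ (b * -(↑u⁻¹ : A)) := by
      rw [spectrum.notMem_iff, hcalc b, sub_add_cancel]
      exact hzu.mul u⁻¹.isUnit
    have h2 : (1:ℂ) ∉ spectrum ℂ (star b * -(↑u⁻¹ : A)) := fun hc => h1 ((key _).mpr hc)
    rw [spectrum.notMem_iff, hcalc (star b)] at h2
    have h3 : IsUnit (algebraMap ℂ A z - b + star b) := by
      have := h2.mul u.isUnit
      rwa [mul_assoc, u.inv_mul, mul_one] at this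
    rw [sub_add] at h3
    exact (spectrum.mem_iff.mp hz) h3
  -- skew-adjointness forces the spectrum to be purely imaginary, so it is {0}
  have hksa : IsSelfAdjoint (Complex.I • (b - star b)) := by
    have : star (Complex.I • (b - star b)) = (-Complex.I) • (star b - b) := by
      rw [star_smul, star_sub, star_star, Complex.star_def, Complex.conj_I]
    rw [IsSelfAdjoint, this, neg_smul, ← smul_neg, neg_sub]
  have hsub : spectrum ℂ (Complex.I • (b - star b)) ⊆ {0} := by
    intro μ hμ
    have hμre := hksa.mem_spectrum_eq_re hμ
    rw [show (Complex.I • (b - star b)) = (Units.mk0 Complex.I Complex.I_ne_zero) • (b - star b)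
      from rfl, spectrum.unit_smul_eq_smul] at hμ
    obtain ⟨w, hw, hmul⟩ := hμ
    have hwim : w.im = 0 := hσd w hw
    have hμval : μ = Complex.I * w := by
      rw [← hmul]; rfl
    have hμim : μ.im = 0 := by rw [hμre]; simp
    have hμre0 : μ.re = 0 := by
      have : μ.im = w.re := by rw [hμval]; simp [Complex.mul_im]
      have hre : w.re = 0 := by rw [← this, hμim]
      rw [hμval]; simp [Complex.mul_re, hre, hwim]
    have : μ = 0 := Complex.ext hμre0 hμim
    simp [this]
  -- conclude
  have hrad : spectralRadius ℂ (Complex.I • (b - star b)) = 0 := by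
    rw [spectralRadius]
    refine le_antisymm ?_ zero_le
    refine iSup₂_le fun z hz => ?_
    have : z = 0 := hsub hz
    simp [this]
  have hnorm : ‖Complex.I • (b - star b)‖₊ = 0 := by
    have := hksa.spectralRadius_eq_nnnorm
    rw [hrad] at this
    exact_mod_cast this.symm
  have hk0 : Complex.I • (b - star b) = 0 := by
    rwa [nnnorm_eq_zero] at hnorm
  have : b - star b = 0 := by
    rcases smul_eq_zero.mp hk0 with hI | h0
    · exact absurd hI Complex.I_ne_zero
    · exact h0
  exact sub_eq_zero.mp this
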